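/- Let p be a prime and n ≥ 1. For T ∈ GL(n, ℚ_p), the closure in GL(n, ℚ_p) of the cyclic group {T^k : k ∈ ℤ} is compact if and only if there exists m ∈ ℕ, m ≥ 1, such that T^m is an isometry of ℚ_p^n, i.e. ‖T^m(x)‖_p = ‖x‖_p for all x ∈ ℚ_p^n. -/

import Mathlib

open scoped MatrixGroups

section Aux

variable {p : ℕ} [Fact p.Prime] {n : ℕ}

private lemma padic_unitBall_isOpen : IsOpen {x : ℚ_[p] | ‖x‖ ≤ 1} := by
  have : {x : ℚ_[p] | ‖x‖ ≤ 1} = Metric.closedBall (0 : ℚ_[p]) 1 := by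
    ext x; simp [Metric.mem_closedBall, dist_eq_norm]
  rw [this]
  exact IsUltrametricDist.isOpen_closedBall _ one_ne_zero

/-- Bound on `mulVec` when all entries are integral. -/
private lemma mulVec_norm_le (A : Matrix (Fin n) (Fin n) ℚ_[p])
    (hA : ∀ i j, ‖A i j‖ ≤ 1) (x : Fin n → ℚ_[p]) : ‖A.mulVec x‖ ≤ ‖x‖ := by
  rw [pi_norm_le_iff_of_nonneg (norm_nonneg x)]
  intro i
  show ‖∑ j, A i j * x j‖ ≤ ‖x‖
  refine IsUltrametricDist.norm_sum_le_of_forall_le_of_nonneg (norm_nonneg x) ?_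
  intro j _
  calc ‖A i j * x j‖ = ‖A i j‖ * ‖x j‖ := norm_mul _ _
    _ ≤ 1 * ‖x‖ :=
      mul_le_mul (hA i j) (norm_le_pi_norm x j) (norm_nonneg _) zero_le_one
    _ = ‖x‖ := one_mul _

/-- The set of `A ∈ GL n ℚ_p` such that both `A` and `A⁻¹` have integral entries. -/
private def goodSet (p n : ℕ) [Fact p.Prime] : Set (GL (Fin n) ℚ_[p]) :=
  {A | (∀ i j, ‖(A : Matrix (Fin n) (Fin n) ℚ_[p]) i j‖ ≤ 1) ∧
    (∀ i j, ‖((A⁻¹ : GL (Fin n) ℚ_[p]) : Matrix (Fin n) (Fin n) ℚ_[p]) i j‖ ≤ 1)}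

private lemma isometry_of_mem_goodSet {A : GL (Fin n) ℚ_[p]} (hA : A ∈ goodSet p n)
    (x : Fin n → ℚ_[p]) :
    ‖(A : Matrix (Fin n) (Fin n) ℚ_[p]).mulVec x‖ = ‖x‖ := by
  refine le_antisymm (mulVec_norm_le _ hA.1 x) ?_
  have h1 : ((A⁻¹ : GL (Fin n) ℚ_[p]) : Matrix (Fin n) (Fin n) ℚ_[p]).mulVec
      ((A : Matrix (Fin n) (Fin n) ℚ_[p]).mulVec x) = x := by
    rw [Matrix.mulVec_mulVec]
    have : ((A⁻¹ : GL (Fin n) ℚ_[p]) : Matrix (Fin n) (Fin n) ℚ_[p]) *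
        (A : Matrix (Fin n) (Fin n) ℚ_[p]) = 1 := A.inv_mul
    rw [this, Matrix.one_mulVec]
  calc ‖x‖ = ‖((A⁻¹ : GL (Fin n) ℚ_[p]) : Matrix (Fin n) (Fin n) ℚ_[p]).mulVec
        ((A : Matrix (Fin n) (Fin n) ℚ_[p]).mulVec x)‖ := by rw [h1]
    _ ≤ ‖(A : Matrix (Fin n) (Fin n) ℚ_[p]).mulVec x‖ := mulVec_norm_le _ hA.2 _

/-- The subgroup of isometries of `GL n ℚ_p`. -/
private def isoSubgroup (p n : ℕ) [Fact p.Prime] : Subgroup (GL (Fin n) ℚ_[p]) where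
  carrier := {A | ∀ x : Fin n → ℚ_[p],
    ‖(A : Matrix (Fin n) (Fin n) ℚ_[p]).mulVec x‖ = ‖x‖}
  one_mem' := by
    intro x
    show ‖((1 : GL (Fin n) ℚ_[p]) : Matrix (Fin n) (Fin n) ℚ_[p]).mulVec x‖ = ‖x‖
    rw [Units.val_one, Matrix.one_mulVec]
  mul_mem' := by
    intro a b ha hb x
    show ‖((a * b : GL (Fin n) ℚ_[p]) : Matrix (Fin n) (Fin n) ℚ_[p]).mulVec x‖ = ‖x‖
    rw [Units.val_mul, ← Matrix.mulVec_mulVec, ha, hb]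
  inv_mem' := by
    intro a ha x
    have := ha (((a⁻¹ : GL (Fin n) ℚ_[p]) : Matrix (Fin n) (Fin n) ℚ_[p]).mulVec x)
    rw [Matrix.mulVec_mulVec, a.mul_inv, Matrix.one_mulVec] at this
    exact this.symm

private lemma entries_le_of_isometry (hn : 1 ≤ n) {A : Matrix (Fin n) (Fin n) ℚ_[p]}
    (h : ∀ x : Fin n → ℚ_[p], ‖A.mulVec x‖ = ‖x‖) (i j : Fin n) : ‖A i j‖ ≤ 1 := by
  have he : ‖(Pi.single j (1 : ℚ_[p]) : Fin n → ℚ_[p])‖ = 1 := by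
    have := h 0
    rw [Matrix.mulVec_zero] at this
    have h1 : ‖A.mulVec (Pi.single j (1 : ℚ_[p]))‖ = ‖(Pi.single j (1 : ℚ_[p]) : Fin n → ℚ_[p])‖ :=
      h _
    rw [Pi.norm_single]
    exact norm_one
  have h2 := h (Pi.single j (1 : ℚ_[p]))
  rw [he] at h2
  calc ‖A i j‖ = ‖A.mulVec (Pi.single j (1 : ℚ_[p])) i‖ := by
        rw [Matrix.mulVec_single]; simp
    _ ≤ ‖A.mulVec (Pi.single j (1 : ℚ_[p]))‖ := norm_le_pi_norm _ i
    _ = 1 := h2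

private lemma iso_mem_goodSet (hn : 1 ≤ n) {A : GL (Fin n) ℚ_[p]}
    (h : A ∈ isoSubgroup p n) : A ∈ goodSet p n :=
  ⟨entries_le_of_isometry hn h, entries_le_of_isometry hn ((isoSubgroup p n).inv_mem h)⟩

private lemma isCompact_unitMatrixBall :
    IsCompact {A : Matrix (Fin n) (Fin n) ℚ_[p] | ∀ i j, ‖A i j‖ ≤ 1} := by
  have h0 : IsCompact {f : Fin n → Fin n → ℚ_[p] | ∀ i j, ‖f i j‖ ≤ 1} := by
    have heq : {f : Fin n → Fin n → ℚ_[p] | ∀ i j, ‖f i j‖ ≤ 1} =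
        Set.pi Set.univ (fun _ : Fin n => Set.pi Set.univ
          fun _ : Fin n => Metric.closedBall (0 : ℚ_[p]) 1) := by
      ext f
      simp [Set.mem_univ_pi, Metric.mem_closedBall, dist_eq_norm]
    rw [heq]
    exact isCompact_univ_pi fun _ => isCompact_univ_pi fun _ => isCompact_closedBall 0 1
  have hcont : Continuous
      (Matrix.of : (Fin n → Fin n → ℚ_[p]) → Matrix (Fin n) (Fin n) ℚ_[p]) :=
    continuous_id
  have himg : (Matrix.of : (Fin n → Fin n → ℚ_[p]) → Matrix (Fin n) (Fin n) ℚ_[p]) ''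
      {f : Fin n → Fin n → ℚ_[p] | ∀ i j, ‖f i j‖ ≤ 1} =
      {A : Matrix (Fin n) (Fin n) ℚ_[p] | ∀ i j, ‖A i j‖ ≤ 1} := by
    ext A
    constructor
    · rintro ⟨f, hf, rfl⟩; exact hf
    · intro hA; exact ⟨Matrix.of.symm A, hA, rfl⟩
  rw [← himg]
  exact h0.image hcont

private lemma isCompact_goodSet : IsCompact (goodSet p n) := by
  rw [Units.isEmbedding_embedProduct.isCompact_iff]
  have himg : Units.embedProduct _ '' goodSet p n =
      {z : Matrix (Fin n) (Fin n) ℚ_[p] × (Matrix (Fin n) (Fin n) ℚ_[p])ᵐᵒᵖ |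
        (∀ i j, ‖z.1 i j‖ ≤ 1) ∧ (∀ i j, ‖z.2.unop i j‖ ≤ 1) ∧
          z.1 * z.2.unop = 1 ∧ z.2.unop * z.1 = 1} := by
    ext z
    constructor
    · rintro ⟨A, hA, rfl⟩
      refine ⟨hA.1, ?_, ?_, ?_⟩
      · simpa [Units.embedProduct] using hA.2
      · simpa [Units.embedProduct] using A.mul_inv
      · simpa [Units.embedProduct] using A.inv_mul
    · rintro ⟨h1, h2, h3, h4⟩
      refine ⟨⟨z.1, z.2.unop, h3, h4⟩, ⟨h1, h2⟩, ?_⟩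
      have hinv : (⟨z.1, z.2.unop, h3, h4⟩ : (Matrix (Fin n) (Fin n) ℚ_[p])ˣ)⁻¹ =
          ⟨z.2.unop, z.1, h4, h3⟩ := Units.inv_mk _ _ _ _
      simp only [Units.embedProduct, MonoidHom.coe_mk, OneHom.coe_mk, hinv]
      exact Prod.ext rfl (MulOpposite.op_unop z.2)
  rw [himg]
  have hsub : {z : Matrix (Fin n) (Fin n) ℚ_[p] × (Matrix (Fin n) (Fin n) ℚ_[p])ᵐᵒᵖ |
        (∀ i j, ‖z.1 i j‖ ≤ 1) ∧ (∀ i j, ‖z.2.unop i j‖ ≤ 1) ∧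
          z.1 * z.2.unop = 1 ∧ z.2.unop * z.1 = 1} ⊆
      {A : Matrix (Fin n) (Fin n) ℚ_[p] | ∀ i j, ‖A i j‖ ≤ 1} ×ˢ
        (MulOpposite.op '' {A : Matrix (Fin n) (Fin n) ℚ_[p] | ∀ i j, ‖A i j‖ ≤ 1}) := by
    rintro z ⟨h1, h2, -⟩
    exact ⟨h1, z.2.unop, h2, MulOpposite.op_unop _⟩
  have hcpt : IsCompact ({A : Matrix (Fin n) (Fin n) ℚ_[p] | ∀ i j, ‖A i j‖ ≤ 1} ×ˢ
      (MulOpposite.op '' {A : Matrix (Fin n) (Fin n) ℚ_[p] | ∀ i j, ‖A i j‖ ≤ 1})) :=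
    isCompact_unitMatrixBall.prod
      (isCompact_unitMatrixBall.image MulOpposite.continuous_op)
  refine hcpt.of_isClosed_subset ?_ hsub
  have e1 : Continuous fun z : Matrix (Fin n) (Fin n) ℚ_[p] ×
      (Matrix (Fin n) (Fin n) ℚ_[p])ᵐᵒᵖ => z.1 := continuous_fst
  have e2 : Continuous fun z : Matrix (Fin n) (Fin n) ℚ_[p] ×
      (Matrix (Fin n) (Fin n) ℚ_[p])ᵐᵒᵖ => z.2.unop :=
    MulOpposite.continuous_unop.comp continuous_snd
  have : {z : Matrix (Fin n) (Fin n) ℚ_[p] × (Matrix (Fin n) (Fin n) ℚ_[p])ᵐᵒᵖ |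
        (∀ i j, ‖z.1 i j‖ ≤ 1) ∧ (∀ i j, ‖z.2.unop i j‖ ≤ 1) ∧
          z.1 * z.2.unop = 1 ∧ z.2.unop * z.1 = 1} =
      (⋂ i, ⋂ j, {z : Matrix (Fin n) (Fin n) ℚ_[p] × (Matrix (Fin n) (Fin n) ℚ_[p])ᵐᵒᵖ |
        ‖z.1 i j‖ ≤ 1}) ∩
      ((⋂ i, ⋂ j, {z : Matrix (Fin n) (Fin n) ℚ_[p] × (Matrix (Fin n) (Fin n) ℚ_[p])ᵐᵒᵖ |
        ‖z.2.unop i j‖ ≤ 1}) ∩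
      ({z : Matrix (Fin n) (Fin n) ℚ_[p] × (Matrix (Fin n) (Fin n) ℚ_[p])ᵐᵒᵖ |
        z.1 * z.2.unop = 1} ∩
       {z : Matrix (Fin n) (Fin n) ℚ_[p] × (Matrix (Fin n) (Fin n) ℚ_[p])ᵐᵒᵖ |
        z.2.unop * z.1 = 1})) := by
    ext z
    simp only [Set.mem_inter_iff, Set.mem_iInter, Set.mem_setOf_eq]
  rw [this]
  refine IsClosed.inter ?_ (IsClosed.inter ?_ (IsClosed.inter ?_ ?_))
  · refine isClosed_iInter fun i => isClosed_iInter fun j => ?_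
    exact isClosed_le (Continuous.norm <| (continuous_apply j).comp
      ((continuous_apply i).comp e1)) continuous_const
  · refine isClosed_iInter fun i => isClosed_iInter fun j => ?_
    exact isClosed_le (Continuous.norm <| (continuous_apply j).comp
      ((continuous_apply i).comp e2)) continuous_const
  · exact isClosed_eq (e1.matrix_mul e2) continuous_const
  · exact isClosed_eq (e2.matrix_mul e1) continuous_const

private lemma isOpen_goodSet : IsOpen (goodSet p n) := by
  have h1 : IsOpen {A : GL (Fin n) ℚ_[p] |
      ∀ i j, ‖(A : Matrix (Fin n) (Fin n) ℚ_[p]) i j‖ ≤ 1} := by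
    have : {A : GL (Fin n) ℚ_[p] | ∀ i j, ‖(A : Matrix (Fin n) (Fin n) ℚ_[p]) i j‖ ≤ 1} =
        ⋂ i, ⋂ j, (fun A : GL (Fin n) ℚ_[p] => (A : Matrix (Fin n) (Fin n) ℚ_[p]) i j) ⁻¹'
          {x : ℚ_[p] | ‖x‖ ≤ 1} := by
      ext A; simp [Set.mem_iInter]
    rw [this]
    refine isOpen_iInter_of_finite fun i => isOpen_iInter_of_finite fun j => ?_
    have hval : Continuous fun A : GL (Fin n) ℚ_[p] =>
        (A : Matrix (Fin n) (Fin n) ℚ_[p]) := Units.continuous_val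
    exact padic_unitBall_isOpen.preimage (hval.matrix_elem i j)
  have h2 : IsOpen {A : GL (Fin n) ℚ_[p] |
      ∀ i j, ‖((A⁻¹ : GL (Fin n) ℚ_[p]) : Matrix (Fin n) (Fin n) ℚ_[p]) i j‖ ≤ 1} := by
    have : {A : GL (Fin n) ℚ_[p] |
        ∀ i j, ‖((A⁻¹ : GL (Fin n) ℚ_[p]) : Matrix (Fin n) (Fin n) ℚ_[p]) i j‖ ≤ 1} =
        ⋂ i, ⋂ j, (fun A : GL (Fin n) ℚ_[p] =>
          ((A⁻¹ : GL (Fin n) ℚ_[p]) : Matrix (Fin n) (Fin n) ℚ_[p]) i j) ⁻¹'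
          {x : ℚ_[p] | ‖x‖ ≤ 1} := by
      ext A; simp [Set.mem_iInter]
    rw [this]
    refine isOpen_iInter_of_finite fun i => isOpen_iInter_of_finite fun j => ?_
    have hval : Continuous fun A : GL (Fin n) ℚ_[p] =>
        ((A⁻¹ : GL (Fin n) ℚ_[p]) : Matrix (Fin n) (Fin n) ℚ_[p]) :=
      Units.continuous_coe_inv
    exact padic_unitBall_isOpen.preimage (hval.matrix_elem i j)
  exact h1.inter h2

private lemma one_mem_goodSet : (1 : GL (Fin n) ℚ_[p]) ∈ goodSet p n := by
  have h : ∀ i j : Fin n, ‖(1 : Matrix (Fin n) (Fin n) ℚ_[p]) i j‖ ≤ 1 := by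
    intro i j
    rcases eq_or_ne i j with h | h
    · subst h
      rw [Matrix.one_apply_eq]
      simp
    · rw [Matrix.one_apply_ne h]
      simp
  refine ⟨fun i j => ?_, fun i j => ?_⟩
  · rw [Units.val_one]; exact h i j
  · rw [inv_one, Units.val_one]; exact h i j

end Aux

set_option maxHeartbeats 1600000 in
/-- For `T ∈ GL(n, ℚ_p)`, the closure of the cyclic group `{T^k : k ∈ ℤ}` in `GL(n, ℚ_p)` is
compact iff some positive power `T^m` is an isometry of `ℚ_p^n` (with the sup norm). -/
theorem stmt1 (p : ℕ) [Fact p.Prime] (n : ℕ) (hn : 1 ≤ n) (T : GL (Fin n) ℚ_[p]) :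
    IsCompact (closure {A : GL (Fin n) ℚ_[p] | ∃ k : ℤ, A = T ^ k}) ↔
      ∃ m : ℕ, 1 ≤ m ∧ ∀ x : Fin n → ℚ_[p],
        ‖((T ^ m : GL (Fin n) ℚ_[p]) : Matrix (Fin n) (Fin n) ℚ_[p]).mulVec x‖ = ‖x‖ := by
  constructor
  · intro hc
    -- find a positive power of `T` in the open neighborhood `goodSet` of `1`
    set S : Set (GL (Fin n) ℚ_[p]) := {A | ∃ k : ℤ, A = T ^ k} with hS
    have hfk : ∀ k : ℕ, T ^ k ∈ closure S := fun k =>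
      subset_closure ⟨(k : ℤ), (zpow_natCast T k).symm⟩
    have hle : Filter.map (fun k : ℕ => T ^ k) Filter.atTop ≤ Filter.principal (closure S) := by
      rw [Filter.le_principal_iff, Filter.mem_map]
      exact Filter.Eventually.of_forall fun k => hfk k
    obtain ⟨L, hLmem, hL⟩ := hc.exists_clusterPt hle
    -- choose a neighborhood `V` of `L` with `V⁻¹ * V ⊆ goodSet`
    have hg : Continuous fun z : GL (Fin n) ℚ_[p] × GL (Fin n) ℚ_[p] => z.1⁻¹ * z.2 :=
      (continuous_inv.comp continuous_fst).mul continuous_snd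
    have hW1 : (fun z : GL (Fin n) ℚ_[p] × GL (Fin n) ℚ_[p] => z.1⁻¹ * z.2) (L, L) = 1 := by
      simp
    have hWnhds : goodSet p n ∈ nhds ((fun z : GL (Fin n) ℚ_[p] × GL (Fin n) ℚ_[p] =>
        z.1⁻¹ * z.2) (L, L)) := by
      rw [hW1]
      exact isOpen_goodSet.mem_nhds one_mem_goodSet
    have hpre : (fun z : GL (Fin n) ℚ_[p] × GL (Fin n) ℚ_[p] => z.1⁻¹ * z.2) ⁻¹'
        goodSet p n ∈ nhds (L, L) := hg.continuousAt.preimage_mem_nhds hWnhds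
    rw [nhds_prod_eq, Filter.mem_prod_iff] at hpre
    obtain ⟨V₁, hV₁, V₂, hV₂, hV⟩ := hpre
    have hfreq1 : ∃ᶠ k in Filter.atTop, T ^ k ∈ V₁ ∩ V₂ := by
      have := (mapClusterPt_iff_frequently).1 hL (V₁ ∩ V₂) (Filter.inter_mem hV₁ hV₂)
      exact this
    obtain ⟨k, hk⟩ := hfreq1.exists
    obtain ⟨l, hlV, hlk⟩ :=
      (hfreq1.and_eventually (Filter.eventually_ge_atTop (k + 1))).exists
    refine ⟨l - k, by omega, ?_⟩
    have hmem : (T ^ k)⁻¹ * T ^ l ∈ goodSet p n := by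
      have h2 : ((T ^ k, T ^ l) : GL (Fin n) ℚ_[p] × GL (Fin n) ℚ_[p]) ∈ V₁ ×ˢ V₂ :=
        Set.mk_mem_prod hk.1 hlV.2
      have h3 := hV h2
      simp only [Set.mem_preimage] at h3
      exact h3
    have hpow : (T ^ k)⁻¹ * T ^ l = T ^ (l - k) := by
      have : T ^ l = T ^ k * T ^ (l - k) := by
        rw [← pow_add]
        congr 1
        omega
      rw [this, ← mul_assoc, inv_mul_cancel, one_mul]
    rw [hpow] at hmem
    exact isometry_of_mem_goodSet hmem
  · rintro ⟨m, hm, hiso⟩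
    have hTm : T ^ m ∈ isoSubgroup p n := hiso
    -- every `T^k` lies in the finite union of compact translates of `goodSet`
    have hsub : {A : GL (Fin n) ℚ_[p] | ∃ k : ℤ, A = T ^ k} ⊆
        ⋃ r ∈ Finset.range m, (fun A : GL (Fin n) ℚ_[p] => T ^ r * A) '' goodSet p n := by
      rintro A ⟨k, rfl⟩
      have hm0 : (0 : ℤ) < (m : ℤ) := by exact_mod_cast hm
      set q : ℤ := k / (m : ℤ)
      set r : ℤ := k % (m : ℤ)
      have hr0 : 0 ≤ r := Int.emod_nonneg k (by omega)
      have hrm : r < (m : ℤ) := Int.emod_lt_of_pos k hm0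
      have hk : k = (m : ℤ) * q + r := (Int.mul_ediv_add_emod k (m : ℤ)).symm
      have hzq : (T ^ m : GL (Fin n) ℚ_[p]) ^ q ∈ isoSubgroup p n :=
        Subgroup.zpow_mem _ hTm q
      refine Set.mem_biUnion (Finset.mem_range.2 (by omega : r.toNat < m)) ?_
      refine ⟨(T ^ m) ^ q, iso_mem_goodSet hn hzq, ?_⟩
      have : T ^ (r.toNat) * (T ^ m) ^ q = T ^ k := by
        rw [← zpow_natCast T m, ← zpow_mul, ← zpow_natCast T r.toNat, ← zpow_add]
        congr 1
        push_cast [Int.toNat_of_nonneg hr0]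
        omega
      exact this
    have hDc : IsCompact (⋃ r ∈ Finset.range m,
        (fun A : GL (Fin n) ℚ_[p] => T ^ r * A) '' goodSet p n) := by
      refine (Finset.range m).finite_toSet.isCompact_biUnion fun r _ => ?_
      exact isCompact_goodSet.image (continuous_mul_left _)
    have hDcl : IsClosed (⋃ r ∈ Finset.range m,
        (fun A : GL (Fin n) ℚ_[p] => T ^ r * A) '' goodSet p n) := hDc.isClosed
    exact hDc.of_isClosed_subset isClosed_closure (closure_minimal hsub hDcl)
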